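/- With the definitions below, for every r ∈ (0, R₄) with r ≠ R₃ the function f is twice differentiable at r with f′(r) = φ(r)·g(r), and f″(r) ≤ −f′(r)·((2/D²)·(r·κ(r) + A) + 8M̃/D) − (η/4)·f(r) − (ξ/4)·f(r)·1_{r<R₃}. -/

import Mathlib

/-- `κ*(r) = max(κ(r), A)`. -/
noncomputable def kstar2 (κ : ℝ → ℝ) (A r : ℝ) : ℝ := max (κ r) A

/-- `h(r) = (2/D²) ∫₀ʳ (s·κ*(s) + A) ds + (8M̃/D)·r`. -/
noncomputable def hfun (κ : ℝ → ℝ) (A D Mt r : ℝ) : ℝ :=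
  2 / D ^ 2 * (∫ s in (0:ℝ)..r, (s * kstar2 κ A s + A)) + 8 * Mt / D * r

/-- `φ(r) = exp(−h(r))`. -/
noncomputable def phi2 (κ : ℝ → ℝ) (A D Mt r : ℝ) : ℝ :=
  Real.exp (-(hfun κ A D Mt r))

/-- `Φ(r) = ∫₀ʳ φ(s) ds`. -/
noncomputable def Phi2 (κ : ℝ → ℝ) (A D Mt r : ℝ) : ℝ :=
  ∫ s in (0:ℝ)..r, phi2 κ A D Mt s

/-- `η = (∫₀^{R₄} Φ(s) φ(s)⁻¹ ds)⁻¹`. -/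
noncomputable def eta (κ : ℝ → ℝ) (A D Mt R₄ : ℝ) : ℝ :=
  (∫ s in (0:ℝ)..R₄, Phi2 κ A D Mt s * (phi2 κ A D Mt s)⁻¹)⁻¹

/-- `ξ = (∫₀^{R₃} Φ(s) φ(s)⁻¹ ds)⁻¹`. -/
noncomputable def xiC (κ : ℝ → ℝ) (A D Mt R₃ : ℝ) : ℝ :=
  (∫ s in (0:ℝ)..R₃, Phi2 κ A D Mt s * (phi2 κ A D Mt s)⁻¹)⁻¹

/-- `g(r) = 1 − (η/4) ∫₀^{r∧R₄} Φφ⁻¹ − (ξ/4) ∫₀^{r∧R₃} Φφ⁻¹`. -/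
noncomputable def gfun2 (κ : ℝ → ℝ) (A D Mt R₃ R₄ r : ℝ) : ℝ :=
  1 - eta κ A D Mt R₄ / 4 * (∫ s in (0:ℝ)..(min r R₄), Phi2 κ A D Mt s * (phi2 κ A D Mt s)⁻¹)
    - xiC κ A D Mt R₃ / 4 * (∫ s in (0:ℝ)..(min r R₃), Phi2 κ A D Mt s * (phi2 κ A D Mt s)⁻¹)

/-- `f(r) = ∫₀^{r∧R₄} φ(s)·g(s) ds`. -/
noncomputable def ffun2 (κ : ℝ → ℝ) (A D Mt R₃ R₄ r : ℝ) : ℝ :=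
  ∫ s in (0:ℝ)..(min r R₄), phi2 κ A D Mt s * gfun2 κ A D Mt R₃ R₄ s

open Set MeasureTheory intervalIntegral Filter

section AuxGeneric

/-- continuity of a primitive on `Ici 0` from continuity of the integrand. -/
lemma prim_contOn_Ici {F : ℝ → ℝ} (hF : ContinuousOn F (Set.Ici 0)) :
    ContinuousOn (fun u => ∫ s in (0:ℝ)..u, F s) (Set.Ici 0) := by
  intro x hx
  have hx0 : (0:ℝ) ≤ x := hx
  have huIcc : Set.uIcc (0:ℝ) (x+1) = Set.Icc 0 (x+1) := uIcc_of_le (by linarith)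
  have hint : IntegrableOn F (Set.uIcc (0:ℝ) (x+1)) volume := by
    rw [huIcc]
    exact (hF.mono Icc_subset_Ici_self).integrableOn_Icc
  have h1 : ContinuousOn (fun u => ∫ s in (0:ℝ)..u, F s) (Set.Icc 0 (x+1)) := by
    have := intervalIntegral.continuousOn_primitive_interval hint
    rwa [huIcc] at this
  have hmem : Set.Icc 0 (x+1) ∈ nhdsWithin x (Set.Ici 0) := by
    rw [← Set.Ici_inter_Iic]
    exact Filter.inter_mem self_mem_nhdsWithin
      (mem_nhdsWithin_of_mem_nhds (Iic_mem_nhds (by linarith)))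
  exact (h1.continuousWithinAt ⟨hx0, by linarith⟩).mono_of_mem_nhdsWithin hmem

/-- the fundamental theorem of calculus at a positive point. -/
lemma prim_hasDerivAt {F : ℝ → ℝ} (hF : ContinuousOn F (Set.Ici 0)) {r : ℝ} (hr : 0 < r) :
    HasDerivAt (fun u => ∫ s in (0:ℝ)..u, F s) (F r) r := by
  apply intervalIntegral.integral_hasDerivAt_right
  · exact (hF.mono (by rw [uIcc_of_le hr.le]; exact Icc_subset_Ici_self)).intervalIntegrable
  · exact (hF.mono Ioi_subset_Ici_self).stronglyMeasurableAtFilter isOpen_Ioi r hr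
  · exact (hF.mono Ioi_subset_Ici_self).continuousAt (Ioi_mem_nhds hr)

lemma contOn_intInt {F : ℝ → ℝ} (hF : ContinuousOn F (Set.Ici 0)) {b : ℝ} (hb : 0 ≤ b) :
    IntervalIntegrable F volume 0 b :=
  (hF.mono (by rw [uIcc_of_le hb]; exact Icc_subset_Ici_self)).intervalIntegrable

end AuxGeneric

section Aux

variable {κ : ℝ → ℝ} {A D Mt R₃ R₄ : ℝ}

lemma Fcont2 (hκc : ContinuousOn κ (Set.Ici 0)) :
    ContinuousOn (fun s => s * kstar2 κ A s + A) (Set.Ici 0) := by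
  unfold kstar2
  exact (continuousOn_id.mul (hκc.sup' continuousOn_const)).add continuousOn_const

lemma hfun_contOn (hκc : ContinuousOn κ (Set.Ici 0)) :
    ContinuousOn (hfun κ A D Mt) (Set.Ici 0) := by
  unfold hfun
  exact (continuousOn_const.mul (prim_contOn_Ici (Fcont2 hκc))).add
    (continuousOn_const.mul continuousOn_id)

lemma phi2_contOn (hκc : ContinuousOn κ (Set.Ici 0)) :
    ContinuousOn (phi2 κ A D Mt) (Set.Ici 0) :=
  Real.continuous_exp.comp_continuousOn (hfun_contOn hκc).neg

lemma phi2_pos (r : ℝ) : 0 < phi2 κ A D Mt r := Real.exp_pos _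

lemma Phi2_contOn (hκc : ContinuousOn κ (Set.Ici 0)) :
    ContinuousOn (Phi2 κ A D Mt) (Set.Ici 0) :=
  prim_contOn_Ici (phi2_contOn hκc)

lemma Phi2_nonneg {r : ℝ} (hr : 0 ≤ r) : 0 ≤ Phi2 κ A D Mt r :=
  intervalIntegral.integral_nonneg hr (fun u _ => (phi2_pos u).le)

lemma Phi2_pos (hκc : ContinuousOn κ (Set.Ici 0)) {r : ℝ} (hr : 0 < r) :
    0 < Phi2 κ A D Mt r :=
  intervalIntegral_pos_of_pos_on (contOn_intInt (phi2_contOn (A := A) (D := D) (Mt := Mt) hκc) hr.le)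
    (fun x _ => phi2_pos x) hr

lemma G_contOn (hκc : ContinuousOn κ (Set.Ici 0)) :
    ContinuousOn (fun s => Phi2 κ A D Mt s * (phi2 κ A D Mt s)⁻¹) (Set.Ici 0) :=
  (Phi2_contOn hκc).mul ((phi2_contOn hκc).inv₀ (fun x _ => (phi2_pos x).ne'))

lemma G_nonneg {r : ℝ} (hr : 0 ≤ r) :
    0 ≤ Phi2 κ A D Mt r * (phi2 κ A D Mt r)⁻¹ :=
  mul_nonneg (Phi2_nonneg hr) (inv_nonneg.2 (phi2_pos r).le)

lemma intG_nonneg (hκc : ContinuousOn κ (Set.Ici 0)) {b : ℝ} (hb : 0 ≤ b) :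
    0 ≤ ∫ s in (0:ℝ)..b, Phi2 κ A D Mt s * (phi2 κ A D Mt s)⁻¹ :=
  intervalIntegral.integral_nonneg hb (fun u hu => G_nonneg hu.1)

lemma intG_pos (hκc : ContinuousOn κ (Set.Ici 0)) {b : ℝ} (hb : 0 < b) :
    0 < ∫ s in (0:ℝ)..b, Phi2 κ A D Mt s * (phi2 κ A D Mt s)⁻¹ :=
  intervalIntegral_pos_of_pos_on (contOn_intInt (G_contOn hκc) hb.le)
    (fun x hx => mul_pos (Phi2_pos hκc hx.1) (inv_pos.2 (phi2_pos x))) hb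

lemma intG_mono (hκc : ContinuousOn κ (Set.Ici 0)) {a b : ℝ} (h0 : 0 ≤ a) (hab : a ≤ b) :
    (∫ s in (0:ℝ)..a, Phi2 κ A D Mt s * (phi2 κ A D Mt s)⁻¹)
      ≤ ∫ s in (0:ℝ)..b, Phi2 κ A D Mt s * (phi2 κ A D Mt s)⁻¹ := by
  apply intervalIntegral.integral_mono_interval le_rfl h0 hab
  · rw [Filter.EventuallyLE, ae_restrict_iff' measurableSet_Ioc]
    exact Filter.Eventually.of_forall (fun x hx => G_nonneg hx.1.le)
  · exact contOn_intInt (G_contOn hκc) (h0.trans hab)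

lemma eta_pos (hκc : ContinuousOn κ (Set.Ici 0)) (hR₄ : 0 < R₄) : 0 < eta κ A D Mt R₄ :=
  inv_pos.2 (intG_pos hκc hR₄)

lemma xiC_pos (hκc : ContinuousOn κ (Set.Ici 0)) (hR₃ : 0 < R₃) : 0 < xiC κ A D Mt R₃ :=
  inv_pos.2 (intG_pos hκc hR₃)

lemma g_le_one (hκc : ContinuousOn κ (Set.Ici 0)) (hR₃ : 0 < R₃) (hR₄ : 0 < R₄)
    {r : ℝ} (hr : 0 ≤ r) : gfun2 κ A D Mt R₃ R₄ r ≤ 1 := by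
  have h4 : 0 ≤ eta κ A D Mt R₄ / 4 *
      (∫ s in (0:ℝ)..(min r R₄), Phi2 κ A D Mt s * (phi2 κ A D Mt s)⁻¹) :=
    mul_nonneg (div_nonneg (eta_pos hκc hR₄).le (by norm_num))
      (intG_nonneg hκc (le_min hr hR₄.le))
  have h3 : 0 ≤ xiC κ A D Mt R₃ / 4 *
      (∫ s in (0:ℝ)..(min r R₃), Phi2 κ A D Mt s * (phi2 κ A D Mt s)⁻¹) :=
    mul_nonneg (div_nonneg (xiC_pos hκc hR₃).le (by norm_num))
      (intG_nonneg hκc (le_min hr hR₃.le))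
  unfold gfun2; linarith

lemma g_ge_half (hκc : ContinuousOn κ (Set.Ici 0)) (hR₃ : 0 < R₃) (hR₄ : 0 < R₄)
    {r : ℝ} (hr : 0 ≤ r) : 1/2 ≤ gfun2 κ A D Mt R₃ R₄ r := by
  have hI₄ : 0 < ∫ s in (0:ℝ)..R₄, Phi2 κ A D Mt s * (phi2 κ A D Mt s)⁻¹ := intG_pos hκc hR₄
  have hI₃ : 0 < ∫ s in (0:ℝ)..R₃, Phi2 κ A D Mt s * (phi2 κ A D Mt s)⁻¹ := intG_pos hκc hR₃
  have h4 : eta κ A D Mt R₄ *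
      (∫ s in (0:ℝ)..(min r R₄), Phi2 κ A D Mt s * (phi2 κ A D Mt s)⁻¹) ≤ 1 := by
    have := intG_mono (A := A) (D := D) (Mt := Mt) hκc (le_min hr hR₄.le) (min_le_right r R₄)
    calc eta κ A D Mt R₄ * _ ≤ eta κ A D Mt R₄ *
        (∫ s in (0:ℝ)..R₄, Phi2 κ A D Mt s * (phi2 κ A D Mt s)⁻¹) :=
          mul_le_mul_of_nonneg_left this (eta_pos hκc hR₄).le
      _ = 1 := inv_mul_cancel₀ hI₄.ne'
  have h3 : xiC κ A D Mt R₃ *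
      (∫ s in (0:ℝ)..(min r R₃), Phi2 κ A D Mt s * (phi2 κ A D Mt s)⁻¹) ≤ 1 := by
    have := intG_mono (A := A) (D := D) (Mt := Mt) hκc (le_min hr hR₃.le) (min_le_right r R₃)
    calc xiC κ A D Mt R₃ * _ ≤ xiC κ A D Mt R₃ *
        (∫ s in (0:ℝ)..R₃, Phi2 κ A D Mt s * (phi2 κ A D Mt s)⁻¹) :=
          mul_le_mul_of_nonneg_left this (xiC_pos hκc hR₃).le
      _ = 1 := inv_mul_cancel₀ hI₃.ne'
  unfold gfun2; linarith

lemma g_contOn (hκc : ContinuousOn κ (Set.Ici 0)) (hR₃ : 0 < R₃) (hR₄ : 0 < R₄) :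
    ContinuousOn (gfun2 κ A D Mt R₃ R₄) (Set.Ici 0) := by
  unfold gfun2
  have hP := prim_contOn_Ici (G_contOn (A := A) (D := D) (Mt := Mt) hκc)
  have h4 : ContinuousOn (fun r => ∫ s in (0:ℝ)..(min r R₄),
      Phi2 κ A D Mt s * (phi2 κ A D Mt s)⁻¹) (Set.Ici 0) :=
    hP.comp ((continuous_id.min continuous_const).continuousOn)
      (fun x hx => le_min hx hR₄.le)
  have h3 : ContinuousOn (fun r => ∫ s in (0:ℝ)..(min r R₃),
      Phi2 κ A D Mt s * (phi2 κ A D Mt s)⁻¹) (Set.Ici 0) :=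
    hP.comp ((continuous_id.min continuous_const).continuousOn)
      (fun x hx => le_min hx hR₃.le)
  exact (continuousOn_const.sub (continuousOn_const.mul h4)).sub
    (continuousOn_const.mul h3)

lemma fg_contOn (hκc : ContinuousOn κ (Set.Ici 0)) (hR₃ : 0 < R₃) (hR₄ : 0 < R₄) :
    ContinuousOn (fun s => phi2 κ A D Mt s * gfun2 κ A D Mt R₃ R₄ s) (Set.Ici 0) :=
  (phi2_contOn hκc).mul (g_contOn hκc hR₃ hR₄)

lemma hfun_hasDerivAt (hκc : ContinuousOn κ (Set.Ici 0)) {r : ℝ} (hr : 0 < r) :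
    HasDerivAt (hfun κ A D Mt)
      (2 / D ^ 2 * (r * kstar2 κ A r + A) + 8 * Mt / D) r := by
  unfold hfun
  have h1 := (prim_hasDerivAt (Fcont2 (A := A) hκc) hr).const_mul (2 / D ^ 2)
  have h2 := (hasDerivAt_id r).const_mul (8 * Mt / D)
  exact (h1.add h2).congr_deriv (by ring)

lemma phi2_hasDerivAt (hκc : ContinuousOn κ (Set.Ici 0)) {r : ℝ} (hr : 0 < r) :
    HasDerivAt (phi2 κ A D Mt)
      (-(2 / D ^ 2 * (r * kstar2 κ A r + A) + 8 * Mt / D) * phi2 κ A D Mt r) r := by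
  unfold phi2
  have h1 : HasDerivAt (hfun κ A D Mt)
      (2 / D ^ 2 * (r * kstar2 κ A r + A) + 8 * Mt / D) r :=
    hfun_hasDerivAt (A := A) (D := D) (Mt := Mt) hκc hr
  have := (h1.neg).exp
  simpa [mul_comm] using this

end Aux

/-- The second-derivative inequality (f''-contraction2): for `0 < r < R₄`,
`r ≠ R₃`, `f` is twice differentiable at `r` with `f′(r) = φ(r)g(r)` and
`f″(r) ≤ −f′(r)((2/D²)(rκ(r)+A) + 8M̃/D) − (η/4)f(r) − (ξ/4)f(r)·1_{r<R₃}`. -/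
theorem f2_second_derivative_inequality
    (κ : ℝ → ℝ) (A D Mt R₃ R₄ : ℝ)
    (hA : 0 ≤ A) (hD : 0 < D) (hMt : 0 ≤ Mt)
    (hR₃ : 0 < R₃) (hR₃₄ : R₃ < R₄)
    (hκc : ContinuousOn κ (Set.Ici 0))
    (hκb : ∃ C, ∀ r, 0 ≤ r → |κ r| ≤ C) :
    ∀ r, 0 < r → r < R₄ → r ≠ R₃ →
      HasDerivAt (ffun2 κ A D Mt R₃ R₄) (phi2 κ A D Mt r * gfun2 κ A D Mt R₃ R₄ r) r ∧
      DifferentiableAt ℝ (deriv (ffun2 κ A D Mt R₃ R₄)) r ∧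
      deriv (deriv (ffun2 κ A D Mt R₃ R₄)) r ≤
        -(phi2 κ A D Mt r * gfun2 κ A D Mt R₃ R₄ r)
            * (2 / D ^ 2 * (r * κ r + A) + 8 * Mt / D)
          - eta κ A D Mt R₄ / 4 * ffun2 κ A D Mt R₃ R₄ r
          - xiC κ A D Mt R₃ / 4 * ffun2 κ A D Mt R₃ R₄ r
              * (if r < R₃ then (1:ℝ) else 0) := by
  have hR₄ : 0 < R₄ := hR₃.trans hR₃₄
  -- first derivative at every point of (0, R₄)
  have hf' : ∀ x, 0 < x → x < R₄ →
      HasDerivAt (ffun2 κ A D Mt R₃ R₄) (phi2 κ A D Mt x * gfun2 κ A D Mt R₃ R₄ x) x := by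
    intro x hx hx4
    have hfeq : ffun2 κ A D Mt R₃ R₄ =ᶠ[nhds x]
        (fun u => ∫ s in (0:ℝ)..u, phi2 κ A D Mt s * gfun2 κ A D Mt R₃ R₄ s) := by
      filter_upwards [Iio_mem_nhds hx4] with u hu
      unfold ffun2
      rw [min_eq_left (le_of_lt hu)]
    have hd := prim_hasDerivAt (fg_contOn (A := A) (D := D) (Mt := Mt) hκc hR₃ hR₄) hx
    exact hfeq.hasDerivAt_iff.mpr hd
  intro r hr hr4 hr3
  have hder1 := hf' r hr hr4
  -- deriv f agrees with φ·g near r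
  have hEv : deriv (ffun2 κ A D Mt R₃ R₄) =ᶠ[nhds r]
      (fun x => phi2 κ A D Mt x * gfun2 κ A D Mt R₃ R₄ x) := by
    filter_upwards [Ioo_mem_nhds hr hr4] with x hx
    exact (hf' x hx.1 hx.2).deriv
  -- derivative of g at r
  have hGcont := G_contOn (κ := κ) (A := A) (D := D) (Mt := Mt) hκc
  have hJ₄ : HasDerivAt (fun x => ∫ s in (0:ℝ)..(min x R₄),
      Phi2 κ A D Mt s * (phi2 κ A D Mt s)⁻¹)
      (Phi2 κ A D Mt r * (phi2 κ A D Mt r)⁻¹) r := by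
    have heq : (fun x => ∫ s in (0:ℝ)..(min x R₄),
        Phi2 κ A D Mt s * (phi2 κ A D Mt s)⁻¹) =ᶠ[nhds r]
        (fun x => ∫ s in (0:ℝ)..x, Phi2 κ A D Mt s * (phi2 κ A D Mt s)⁻¹) := by
      filter_upwards [Iio_mem_nhds hr4] with u hu
      rw [min_eq_left (le_of_lt hu)]
    exact heq.hasDerivAt_iff.mpr (prim_hasDerivAt hGcont hr)
  have hJ₃ : HasDerivAt (fun x => ∫ s in (0:ℝ)..(min x R₃),
      Phi2 κ A D Mt s * (phi2 κ A D Mt s)⁻¹)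
      ((if r < R₃ then (1:ℝ) else 0) * (Phi2 κ A D Mt r * (phi2 κ A D Mt r)⁻¹)) r := by
    rcases lt_or_gt_of_ne hr3 with hc | hc
    · rw [if_pos hc, one_mul]
      have heq : (fun x => ∫ s in (0:ℝ)..(min x R₃),
          Phi2 κ A D Mt s * (phi2 κ A D Mt s)⁻¹) =ᶠ[nhds r]
          (fun x => ∫ s in (0:ℝ)..x, Phi2 κ A D Mt s * (phi2 κ A D Mt s)⁻¹) := by
        filter_upwards [Iio_mem_nhds hc] with u hu
        rw [min_eq_left (le_of_lt hu)]
      exact heq.hasDerivAt_iff.mpr (prim_hasDerivAt hGcont hr)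
    · rw [if_neg (not_lt.mpr hc.le), zero_mul]
      have heq : (fun x => ∫ s in (0:ℝ)..(min x R₃),
          Phi2 κ A D Mt s * (phi2 κ A D Mt s)⁻¹) =ᶠ[nhds r]
          (fun _ => ∫ s in (0:ℝ)..R₃, Phi2 κ A D Mt s * (phi2 κ A D Mt s)⁻¹) := by
        filter_upwards [Ioi_mem_nhds hc] with u hu
        rw [min_eq_right (le_of_lt hu)]
      exact heq.hasDerivAt_iff.mpr (hasDerivAt_const r _)
  have hg' : HasDerivAt (gfun2 κ A D Mt R₃ R₄)
      (-(eta κ A D Mt R₄ / 4 * (Phi2 κ A D Mt r * (phi2 κ A D Mt r)⁻¹))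
        - xiC κ A D Mt R₃ / 4 * (Phi2 κ A D Mt r * (phi2 κ A D Mt r)⁻¹)
            * (if r < R₃ then (1:ℝ) else 0)) r := by
    have := ((hasDerivAt_const r (1:ℝ)).sub (hJ₄.const_mul (eta κ A D Mt R₄ / 4))).sub
      (hJ₃.const_mul (xiC κ A D Mt R₃ / 4))
    refine this.congr_deriv ?_
    ring
  have hφ' := phi2_hasDerivAt (A := A) (D := D) (Mt := Mt) hκc hr
  have hφg := hφ'.mul hg'
  refine ⟨hder1, ?_, ?_⟩
  · exact (hEv.differentiableAt_iff).mpr hφg.differentiableAt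
  · have hE : deriv (deriv (ffun2 κ A D Mt R₃ R₄)) r =
        -(2 / D ^ 2 * (r * kstar2 κ A r + A) + 8 * Mt / D) * phi2 κ A D Mt r
            * gfun2 κ A D Mt R₃ R₄ r
          + phi2 κ A D Mt r *
            (-(eta κ A D Mt R₄ / 4 * (Phi2 κ A D Mt r * (phi2 κ A D Mt r)⁻¹))
              - xiC κ A D Mt R₃ / 4 * (Phi2 κ A D Mt r * (phi2 κ A D Mt r)⁻¹)
                  * (if r < R₃ then (1:ℝ) else 0)) := by
      rw [hEv.deriv_eq]
      exact hφg.deriv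
    rw [hE]
    have hφpos : 0 < phi2 κ A D Mt r := phi2_pos r
    have hP : phi2 κ A D Mt r * (Phi2 κ A D Mt r * (phi2 κ A D Mt r)⁻¹) =
        Phi2 κ A D Mt r := by
      field_simp
    have hghalf : 1/2 ≤ gfun2 κ A D Mt R₃ R₄ r := g_ge_half (A := A) (D := D) (Mt := Mt) hκc hR₃ hR₄ hr.le
    have hφg_nonneg : 0 ≤ phi2 κ A D Mt r * gfun2 κ A D Mt R₃ R₄ r :=
      mul_nonneg hφpos.le (by linarith)
    -- κ ≤ κ*
    have hHk : 2 / D ^ 2 * (r * κ r + A) + 8 * Mt / D ≤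
        2 / D ^ 2 * (r * kstar2 κ A r + A) + 8 * Mt / D := by
      have h1 : κ r ≤ kstar2 κ A r := le_max_left _ _
      have h2 : (0:ℝ) ≤ 2 / D ^ 2 := by positivity
      nlinarith [hr.le, mul_le_mul_of_nonneg_left h1 hr.le]
    have hmul : phi2 κ A D Mt r * gfun2 κ A D Mt R₃ R₄ r *
          (2 / D ^ 2 * (r * κ r + A) + 8 * Mt / D) ≤
        phi2 κ A D Mt r * gfun2 κ A D Mt R₃ R₄ r *
          (2 / D ^ 2 * (r * kstar2 κ A r + A) + 8 * Mt / D) :=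
      mul_le_mul_of_nonneg_left hHk hφg_nonneg
    -- f ≤ Φ
    have hfΦ : ffun2 κ A D Mt R₃ R₄ r ≤ Phi2 κ A D Mt r := by
      unfold ffun2 Phi2
      rw [min_eq_left hr4.le]
      apply intervalIntegral.integral_mono_on hr.le
      · exact contOn_intInt (fg_contOn (A := A) (D := D) (Mt := Mt) hκc hR₃ hR₄) hr.le
      · exact contOn_intInt (phi2_contOn (A := A) (D := D) (Mt := Mt) hκc) hr.le
      · intro x hx
        exact mul_le_of_le_one_right (phi2_pos x).le (g_le_one (A := A) (D := D) (Mt := Mt) hκc hR₃ hR₄ hx.1)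
    have hη := eta_pos (A := A) (D := D) (Mt := Mt) hκc hR₄
    have hξ := xiC_pos (A := A) (D := D) (Mt := Mt) hκc hR₃
    have hηf : eta κ A D Mt R₄ / 4 * ffun2 κ A D Mt R₃ R₄ r ≤
        eta κ A D Mt R₄ / 4 * Phi2 κ A D Mt r :=
      mul_le_mul_of_nonneg_left hfΦ (by positivity)
    by_cases hc : r < R₃
    · simp only [if_pos hc, mul_one]
      have hξf : xiC κ A D Mt R₃ / 4 * ffun2 κ A D Mt R₃ R₄ r ≤
          xiC κ A D Mt R₃ / 4 * Phi2 κ A D Mt r :=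
        mul_le_mul_of_nonneg_left hfΦ (by positivity)
      nlinarith [hP, hmul, hηf, hξf]
    · simp only [if_neg hc, mul_zero]
      nlinarith [hP, hmul, hηf]
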